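/- Equivalence of relative smoothness and convexity of the difference: for convex proper functions F and φ on a convex set C and L ≥ 0, F is L-smooth relative to φ on C (i.e., F(ν) − F(μ) − d⁺F(μ)(ν−μ) ≤ L·(φ(ν) − φ(μ) − d⁺φ(μ)(ν−μ)) for all μ, ν ∈ C ∩ dom(F) ∩ dom(φ)) if and only if Lφ − F is convex on C ∩ dom(F) ∩ dom(φ). -/

import Mathlib

open Filter Set


namespace RelSmooth

/-- Slope of `f` between `a` and `b`. -/
noncomputable def sl (f : ℝ → ℝ) (a b : ℝ) : ℝ := (f b - f a) / (b - a)

/-- Difference quotient of `f` at base `m` toward `t`, step `h`. -/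
noncomputable def qd (f : ℝ → ℝ) (m t h : ℝ) : ℝ := h⁻¹ * (f (m + h * (t - m)) - f m)

/-- One-sided directional derivative value in `EReal`. -/
noncomputable def dd (f : ℝ → ℝ) (m t : ℝ) : EReal :=
  ⨅ h : (Set.Ioc (0:ℝ) 1), ((qd f m t h : ℝ) : EReal)

lemma sl_comm (f : ℝ → ℝ) (a b : ℝ) : sl f a b = sl f b a := by
  unfold sl
  rcases eq_or_ne a b with rfl | h
  · rfl
  · rw [← neg_div_neg_eq]; ring_nf

lemma secant_mono {f : ℝ → ℝ} (hf : ConvexOn ℝ (Icc (0:ℝ) 1) f) {a x y : ℝ}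
    (ha : a ∈ Icc (0:ℝ) 1) (hx : x ∈ Icc (0:ℝ) 1) (hy : y ∈ Icc (0:ℝ) 1)
    (hxa : x ≠ a) (hya : y ≠ a) (hxy : x ≤ y) : sl f a x ≤ sl f a y :=
  hf.secant_mono ha hx hy hxa hya hxy

lemma slope_mono_adj {f : ℝ → ℝ} (hf : ConvexOn ℝ (Icc (0:ℝ) 1) f) {x y z : ℝ}
    (hx : x ∈ Icc (0:ℝ) 1) (hz : z ∈ Icc (0:ℝ) 1) (hxy : x < y) (hyz : y < z) :
    sl f x y ≤ sl f y z :=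
  hf.slope_mono_adjacent hx hz hxy hyz

lemma comb_mem {m t h : ℝ} (hm : m ∈ Icc (0:ℝ) 1) (ht : t ∈ Icc (0:ℝ) 1)
    (hh : h ∈ Icc (0:ℝ) 1) : m + h * (t - m) ∈ Icc (0:ℝ) 1 := by
  obtain ⟨hm0, hm1⟩ := hm; obtain ⟨ht0, ht1⟩ := ht; obtain ⟨hh0, hh1⟩ := hh
  constructor <;> nlinarith

lemma qd_eq_slope {f : ℝ → ℝ} {m t h : ℝ} (hh : h ≠ 0) (hne : t ≠ m) :
    qd f m t h = (t - m) * sl f m (m + h * (t - m)) := by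
  have hd : t - m ≠ 0 := sub_ne_zero.2 hne
  have h1 : m + h * (t - m) - m = h * (t - m) := by ring
  rw [sl, qd, h1]
  field_simp

lemma qd_monotoneOn {f : ℝ → ℝ} (hf : ConvexOn ℝ (Icc (0:ℝ) 1) f) {m t : ℝ}
    (hm : m ∈ Icc (0:ℝ) 1) (ht : t ∈ Icc (0:ℝ) 1) (hne : t ≠ m) :
    MonotoneOn (qd f m t) (Ioc (0:ℝ) 1) := by
  intro h₁ hh₁ h₂ hh₂ hle
  have h₂pos : (0:ℝ) < h₂ := hh₁.1.trans_le hle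
  have hz₁ : m + h₁ * (t - m) ∈ Icc (0:ℝ) 1 := comb_mem hm ht ⟨hh₁.1.le, hh₁.2⟩
  have hz₂ : m + h₂ * (t - m) ∈ Icc (0:ℝ) 1 := comb_mem hm ht ⟨h₂pos.le, hh₂.2⟩
  have hd : t - m ≠ 0 := sub_ne_zero.2 hne
  have hne₁ : m + h₁ * (t - m) ≠ m := by
    intro e; exact hd (by nlinarith [hh₁.1])
  have hne₂ : m + h₂ * (t - m) ≠ m := by
    intro e; exact hd (by nlinarith [h₂pos])
  rw [qd_eq_slope (ne_of_gt hh₁.1) hne, qd_eq_slope (ne_of_gt h₂pos) hne]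
  rcases lt_or_gt_of_ne hne with hlt | hgt
  · -- t < m
    have : sl f m (m + h₂ * (t - m)) ≤ sl f m (m + h₁ * (t - m)) :=
      secant_mono hf hm hz₂ hz₁ hne₂ hne₁ (by nlinarith)
    nlinarith
  · -- m < t
    have : sl f m (m + h₁ * (t - m)) ≤ sl f m (m + h₂ * (t - m)) :=
      secant_mono hf hm hz₁ hz₂ hne₁ hne₂ (by nlinarith)
    nlinarith

lemma dd_le {f : ℝ → ℝ} {m t h : ℝ} (hh : h ∈ Ioc (0:ℝ) 1) :
    dd f m t ≤ ((qd f m t h : ℝ) : EReal) :=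
  iInf_le _ (⟨h, hh⟩ : Set.Ioc (0:ℝ) 1)

lemma dd_ge {f : ℝ → ℝ} {m t : ℝ} {c : ℝ} (hc : ∀ h ∈ Ioc (0:ℝ) 1, c ≤ qd f m t h) :
    ((c : ℝ) : EReal) ≤ dd f m t :=
  le_iInf fun h => EReal.coe_le_coe_iff.2 (hc h h.2)

lemma qd_one {f : ℝ → ℝ} {m t : ℝ} : qd f m t 1 = f t - f m := by
  simp [qd]

lemma dd_ne_top {f : ℝ → ℝ} {m t : ℝ} : dd f m t ≠ ⊤ := by
  intro e
  have h := dd_le (f := f) (m := m) (t := t) (h := 1) ⟨one_pos, le_refl 1⟩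
  rw [e, top_le_iff] at h
  exact (EReal.coe_ne_top _) h

/-- Monotone-on-(0,1] functions tend to their `EReal` infimum from the right at 0. -/
lemma tendsto_qd {q : ℝ → ℝ} (hq : MonotoneOn q (Ioc (0:ℝ) 1)) :
    Tendsto (fun h => ((q h : ℝ) : EReal)) (nhdsWithin (0:ℝ) (Ioi 0))
      (nhds (⨅ h : (Set.Ioc (0:ℝ) 1), ((q h : ℝ) : EReal))) := by
  rw [tendsto_order]
  constructor
  · intro x hx
    filter_upwards [Ioc_mem_nhdsGT_of_mem (⟨le_refl _, one_pos⟩ : (0:ℝ) ∈ Ico (0:ℝ) 1)]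
      with h hh
    exact lt_of_lt_of_le hx (iInf_le _ (⟨h, hh⟩ : Set.Ioc (0:ℝ) 1))
  · intro x hx
    obtain ⟨h₀, hh₀⟩ : ∃ h₀ : Set.Ioc (0:ℝ) 1, ((q h₀ : ℝ) : EReal) < x := iInf_lt_iff.1 hx
    filter_upwards [Ioc_mem_nhdsGT_of_mem (⟨le_refl _, h₀.2.1⟩ : (0:ℝ) ∈ Ico (0:ℝ) h₀)]
      with h hh
    have : q h ≤ q h₀ := hq ⟨hh.1, hh.2.trans h₀.2.2⟩ h₀.2 hh.2
    exact lt_of_le_of_lt (EReal.coe_le_coe_iff.2 this) hh₀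


/-! ### Interior finiteness and derivative bounds -/

section Interior

variable {f : ℝ → ℝ} {m t : ℝ}

lemma dd_real (hf : ConvexOn ℝ (Icc (0:ℝ) 1) f) (hm : m ∈ Ioo (0:ℝ) 1)
    (ht : t ∈ Icc (0:ℝ) 1) (hne : t ≠ m) :
    dd f m t = (((dd f m t).toReal : ℝ) : EReal) := by
  have hmI : m ∈ Icc (0:ℝ) 1 := ⟨hm.1.le, hm.2.le⟩
  have hc : ∃ c : ℝ, ∀ h ∈ Ioc (0:ℝ) 1, c ≤ qd f m t h := by
    rcases lt_or_gt_of_ne hne with hlt | hgt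
    · -- t < m
      refine ⟨(t - m) * sl f m 1, fun h hh => ?_⟩
      have hz : m + h * (t - m) ∈ Icc (0:ℝ) 1 := comb_mem hmI ht ⟨hh.1.le, hh.2⟩
      have hzm : m + h * (t - m) < m := by nlinarith [hh.1]
      have h1 : sl f (m + h * (t - m)) m ≤ sl f m 1 :=
        slope_mono_adj hf hz ⟨zero_le_one, le_refl 1⟩ hzm hm.2
      rw [qd_eq_slope (ne_of_gt hh.1) hne, sl_comm f m (m + h * (t - m))]
      nlinarith
    · -- m < t
      refine ⟨(t - m) * sl f 0 m, fun h hh => ?_⟩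
      have hz : m + h * (t - m) ∈ Icc (0:ℝ) 1 := comb_mem hmI ht ⟨hh.1.le, hh.2⟩
      have hzm : m < m + h * (t - m) := by nlinarith [hh.1]
      have h1 : sl f 0 m ≤ sl f m (m + h * (t - m)) :=
        slope_mono_adj hf ⟨le_refl 0, zero_le_one⟩ hz hm.1 hzm
      rw [qd_eq_slope (ne_of_gt hh.1) hne]
      nlinarith
  obtain ⟨c, hc⟩ := hc
  have hbot : dd f m t ≠ ⊥ := by
    intro e
    have h2 := dd_ge hc
    rw [e, le_bot_iff] at h2
    exact (EReal.coe_ne_bot _) h2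
  exact (EReal.coe_toReal dd_ne_top hbot).symm

lemma toReal_dd_le (hf : ConvexOn ℝ (Icc (0:ℝ) 1) f) (hm : m ∈ Ioo (0:ℝ) 1)
    (ht : t ∈ Icc (0:ℝ) 1) (hne : t ≠ m) {h : ℝ} (hh : h ∈ Ioc (0:ℝ) 1) :
    (dd f m t).toReal ≤ qd f m t h := by
  have h1 := dd_le (f := f) (m := m) (t := t) hh
  rw [dd_real hf hm ht hne] at h1
  exact_mod_cast h1

lemma le_toReal_dd (hf : ConvexOn ℝ (Icc (0:ℝ) 1) f) (hm : m ∈ Ioo (0:ℝ) 1)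
    (ht : t ∈ Icc (0:ℝ) 1) (hne : t ≠ m) {c : ℝ}
    (hc : ∀ h ∈ Ioc (0:ℝ) 1, c ≤ qd f m t h) :
    c ≤ (dd f m t).toReal := by
  have h1 := dd_ge hc
  rw [dd_real hf hm ht hne] at h1
  exact_mod_cast h1

lemma one_ne (hm : m ∈ Ioo (0:ℝ) 1) : (1:ℝ) ≠ m := (ne_of_gt hm.2)
lemma zero_ne (hm : m ∈ Ioo (0:ℝ) 1) : (0:ℝ) ≠ m := (ne_of_lt hm.1)

lemma mem01 : (1:ℝ) ∈ Icc (0:ℝ) 1 := ⟨zero_le_one, le_refl 1⟩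
lemma mem00 : (0:ℝ) ∈ Icc (0:ℝ) 1 := ⟨le_refl 0, zero_le_one⟩

/-- Right derivative is below every right slope. -/
lemma right_le (hf : ConvexOn ℝ (Icc (0:ℝ) 1) f) (hm : m ∈ Ioo (0:ℝ) 1)
    {z : ℝ} (hz : z ∈ Ioc m 1) :
    (dd f m 1).toReal ≤ (1 - m) * sl f m z := by
  have h1m : (0:ℝ) < 1 - m := by linarith [hm.2]
  have hh : (z - m) / (1 - m) ∈ Ioc (0:ℝ) 1 := by
    constructor
    · exact div_pos (sub_pos.2 hz.1) h1m
    · rw [div_le_one h1m]; linarith [hz.2]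
  have key := toReal_dd_le hf hm mem01 (one_ne hm) hh
  rw [qd_eq_slope (ne_of_gt hh.1) (one_ne hm)] at key
  have harg : m + (z - m) / (1 - m) * (1 - m) = z := by field_simp; ring
  rwa [harg] at key

/-- Right derivative is above every left slope. -/
lemma right_ge (hf : ConvexOn ℝ (Icc (0:ℝ) 1) f) (hm : m ∈ Ioo (0:ℝ) 1)
    {u : ℝ} (hu : u ∈ Ico (0:ℝ) m) :
    (1 - m) * sl f u m ≤ (dd f m 1).toReal := by
  have h1m : (0:ℝ) < 1 - m := by linarith [hm.2]
  refine le_toReal_dd hf hm mem01 (one_ne hm) (fun h hh => ?_)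
  rw [qd_eq_slope (ne_of_gt hh.1) (one_ne hm)]
  have hz : m + h * (1 - m) ∈ Icc (0:ℝ) 1 := comb_mem ⟨hm.1.le, hm.2.le⟩ mem01 ⟨hh.1.le, hh.2⟩
  have hzm : m < m + h * (1 - m) := by nlinarith [hh.1]
  have h1 : sl f u m ≤ sl f m (m + h * (1 - m)) :=
    slope_mono_adj hf ⟨hu.1, by linarith [hu.2, hm.2]⟩ hz hu.2 hzm
  nlinarith

/-- Left derivative value bound: `dd f m 0 ≤ -m * sl f x m` for `x < m`. -/
lemma left_le (hf : ConvexOn ℝ (Icc (0:ℝ) 1) f) (hm : m ∈ Ioo (0:ℝ) 1)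
    {x : ℝ} (hx : x ∈ Ico (0:ℝ) m) :
    (dd f m 0).toReal ≤ -m * sl f x m := by
  have hm0 : (0:ℝ) < m := hm.1
  have hh : (m - x) / m ∈ Ioc (0:ℝ) 1 := by
    constructor
    · exact div_pos (sub_pos.2 hx.2) hm0
    · rw [div_le_one hm0]; linarith [hx.1]
  have key := toReal_dd_le hf hm mem00 (zero_ne hm) hh
  rw [qd_eq_slope (ne_of_gt hh.1) (zero_ne hm)] at key
  have harg : m + (m - x) / m * (0 - m) = x := by field_simp; ring
  rw [harg] at key
  rw [sl_comm f x m]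
  calc (dd f m 0).toReal ≤ (0 - m) * sl f m x := key
    _ = -m * sl f m x := by ring

lemma left_ge (hf : ConvexOn ℝ (Icc (0:ℝ) 1) f) (hm : m ∈ Ioo (0:ℝ) 1)
    {v : ℝ} (hv : v ∈ Ioc m 1) :
    -m * sl f m v ≤ (dd f m 0).toReal := by
  have hm0 : (0:ℝ) < m := hm.1
  refine le_toReal_dd hf hm mem00 (zero_ne hm) (fun h hh => ?_)
  rw [qd_eq_slope (ne_of_gt hh.1) (zero_ne hm)]
  have hz : m + h * (0 - m) ∈ Icc (0:ℝ) 1 := comb_mem ⟨hm.1.le, hm.2.le⟩ mem00 ⟨hh.1.le, hh.2⟩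
  have hzm : m + h * (0 - m) < m := by nlinarith [hh.1]
  have h1 : sl f (m + h * (0 - m)) m ≤ sl f m v :=
    slope_mono_adj hf hz ⟨by linarith [hm.1, hv.1], hv.2⟩ hzm hv.1
  rw [sl_comm f m (m + h * (0 - m))]
  nlinarith

end Interior

/-! ### The jump inequality and the core convexity lemma -/

section Core

variable {f g : ℝ → ℝ} {L : ℝ}

/-- The jump of `f` at an interior point is at most `L` times the jump of `g`. -/
lemma jump_le (hf : ConvexOn ℝ (Icc (0:ℝ) 1) f) (hg : ConvexOn ℝ (Icc (0:ℝ) 1) g)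
    (hL : 0 ≤ L)
    (hstar : ∀ m ∈ Ioo (0:ℝ) 1, ∀ t ∈ Icc (0:ℝ) 1, t ≠ m →
      f t - f m - (dd f m t).toReal ≤ L * (g t - g m - (dd g m t).toReal))
    {m : ℝ} (hm : m ∈ Ioo (0:ℝ) 1) :
    (dd f m 1).toReal / (1 - m) + (dd f m 0).toReal / m
      ≤ L * ((dd g m 1).toReal / (1 - m) + (dd g m 0).toReal / m) := by
  have hm0 : (0:ℝ) < m := hm.1
  have h1m : (0:ℝ) < 1 - m := by linarith only [hm.2]
  set fp : ℝ := (dd f m 1).toReal / (1 - m) with hfp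
  set fm : ℝ := -(dd f m 0).toReal / m with hfm
  set gp : ℝ := (dd g m 1).toReal / (1 - m) with hgp
  set gm : ℝ := -(dd g m 0).toReal / m with hgm
  have key : fp - fm ≤ L * (gp - gm) := by
    refine le_of_forall_pos_le_add (fun δ hδ => ?_)
    set δ' : ℝ := δ / (5 * (L + 1)) with hδ'
    have hδ'0 : 0 < δ' := by positivity
    clear_value δ'
    -- choose a right point for g with slope close to gp
    obtain ⟨zA, hzA, hA⟩ : ∃ z ∈ Ioc m 1, sl g m z ≤ gp + δ' := by
      have hlt : dd g m 1 < (((dd g m 1).toReal + (1 - m) * δ' : ℝ) : EReal) := by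
        rw [dd_real hg hm mem01 (one_ne hm)]
        exact_mod_cast (by linarith only [mul_pos h1m hδ'0] :
          (dd g m 1).toReal < (dd g m 1).toReal + (1 - m) * δ')
      rw [dd, iInf_lt_iff] at hlt
      obtain ⟨⟨h₀, hh₀⟩, hlt⟩ := hlt
      have hq : qd g m 1 h₀ < (dd g m 1).toReal + (1 - m) * δ' := by exact_mod_cast hlt
      rw [qd_eq_slope (ne_of_gt hh₀.1) (one_ne hm)] at hq
      refine ⟨m + h₀ * (1 - m), ⟨by nlinarith only [hh₀.1, h1m],
        by nlinarith only [hh₀.2, h1m]⟩, ?_⟩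
      have hgp' : (1 - m) * gp = (dd g m 1).toReal := by rw [hgp]; field_simp
      nlinarith only [hq, hgp', h1m, hδ'0]
    -- choose a left point for g with slope close to gm
    obtain ⟨xB, hxB, hB⟩ : ∃ x ∈ Ico (0:ℝ) m, gm - δ' ≤ sl g x m := by
      have hlt : dd g m 0 < (((dd g m 0).toReal + m * δ' : ℝ) : EReal) := by
        rw [dd_real hg hm mem00 (zero_ne hm)]
        exact_mod_cast (by linarith only [mul_pos hm0 hδ'0] :
          (dd g m 0).toReal < (dd g m 0).toReal + m * δ')
      rw [dd, iInf_lt_iff] at hlt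
      obtain ⟨⟨h₀, hh₀⟩, hlt⟩ := hlt
      have hq : qd g m 0 h₀ < (dd g m 0).toReal + m * δ' := by exact_mod_cast hlt
      rw [qd_eq_slope (ne_of_gt hh₀.1) (zero_ne hm)] at hq
      refine ⟨m + h₀ * (0 - m), ⟨by nlinarith only [hh₀.2, hm0],
        by nlinarith only [hh₀.1, hm0]⟩, ?_⟩
      have hgm' : m * gm = -(dd g m 0).toReal := by rw [hgm]; field_simp
      rw [sl_comm]
      nlinarith only [hq, hgm', hm0, hδ'0]
    clear_value fp fm gp gm
    -- the step size
    set ε : ℝ := min (zA - m) (min ((m - xB) / 2) (min (m / 4) ((1 - m) / 2))) with hε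
    have hε0 : 0 < ε := by
      refine lt_min (by linarith only [hzA.1]) (lt_min (by linarith only [hxB.2])
        (lt_min (by linarith only [hm0]) (by linarith only [h1m])))
    have hεA : ε ≤ zA - m := min_le_left _ _
    have hεB : ε ≤ (m - xB) / 2 := le_trans (min_le_right _ _) (min_le_left _ _)
    have hεm : ε ≤ m / 4 :=
      le_trans (min_le_right _ _) (le_trans (min_le_right _ _) (min_le_left _ _))
    have hε1m : ε ≤ (1 - m) / 2 :=
      le_trans (min_le_right _ _) (le_trans (min_le_right _ _) (min_le_right _ _))
    clear_value ε
    -- points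
    have hm' : m - ε ∈ Ioo (0:ℝ) 1 :=
      ⟨by linarith only [hεm, hm0], by linarith only [hε0, hm.2]⟩
    have ht' : m + ε ∈ Icc (0:ℝ) 1 :=
      ⟨by linarith only [hm0, hε0], by linarith only [hε1m, hm.2]⟩
    have hne' : m + ε ≠ m - ε := fun e => by linarith only [hε0, e.le]
    -- slopes
    set S1 : ℝ := sl f (m - ε) m with hS1
    set S2 : ℝ := sl f m (m + ε) with hS2
    set T1 : ℝ := sl g (m - ε) m with hT1
    set T2 : ℝ := sl g m (m + ε) with hT2
    set TB : ℝ := sl g (m - 2*ε) (m - ε) with hTB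
    set TM : ℝ := sl g (m - 2*ε) m with hTM
    -- slope decompositions
    have eS1 : ε * S1 = f m - f (m - ε) := by
      rw [hS1, sl, show m - (m - ε) = ε from by ring]; field_simp
    have eS2 : ε * S2 = f (m + ε) - f m := by
      rw [hS2, sl, show m + ε - m = ε from by ring]; field_simp
    have eT1 : ε * T1 = g m - g (m - ε) := by
      rw [hT1, sl, show m - (m - ε) = ε from by ring]; field_simp
    have eT2 : ε * T2 = g (m + ε) - g m := by
      rw [hT2, sl, show m + ε - m = ε from by ring]; field_simp
    have eTB : ε * TB = g (m - ε) - g (m - 2*ε) := by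
      rw [hTB, sl, show m - ε - (m - 2*ε) = ε from by ring]; field_simp
    have eTM : 2 * ε * TM = g m - g (m - 2*ε) := by
      rw [hTM, sl, show m - (m - 2*ε) = 2 * ε from by ring]; field_simp
    clear_value S1 S2 T1 T2 TB TM
    -- b3 : fp ≤ S2
    have b3 : fp ≤ S2 := by
      have h1 := right_le hf hm (z := m + ε)
        ⟨by linarith only [hε0], by linarith only [hε1m, hm.2]⟩
      rw [hfp, div_le_iff₀ h1m, hS2]; linarith only [h1]
    -- b4 : S1 ≤ fm
    have b4 : S1 ≤ fm := by
      have h1 := left_le hf hm (x := m - ε)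
        ⟨by linarith only [hεm, hm0], by linarith only [hε0]⟩
      rw [hfm, le_div_iff₀ hm0, hS1]; linarith only [h1]
    -- b5 : T2 ≤ gp + δ'
    have b5 : T2 ≤ gp + δ' := by
      have hmono : sl g m (m + ε) ≤ sl g m zA := by
        refine secant_mono hg ⟨hm0.le, hm.2.le⟩
          ⟨by linarith only [hm0, hε0], by linarith only [hε1m, hm.2]⟩
          ⟨by linarith only [hzA.1, hm0], hzA.2⟩
          (ne_of_gt (by linarith only [hε0] : m < m + ε))
          (ne_of_gt hzA.1) (by linarith only [hεA])
      rw [hT2]; exact le_trans hmono hA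
    -- b6 : T1 ≤ gm
    have b6 : T1 ≤ gm := by
      have h1 := left_le hg hm (x := m - ε)
        ⟨by linarith only [hεm, hm0], by linarith only [hε0]⟩
      rw [hgm, le_div_iff₀ hm0, hT1]; linarith only [h1]
    -- B chain : gm - δ' ≤ TM
    have hBM : gm - δ' ≤ TM := by
      have hmono : sl g m xB ≤ sl g m (m - 2*ε) := by
        refine secant_mono hg ⟨hm0.le, hm.2.le⟩
          ⟨hxB.1, by linarith only [hxB.2, hm.2]⟩
          ⟨by linarith only [hεm, hm0], by linarith only [hε0, hm.2]⟩
          (ne_of_lt hxB.2) (ne_of_lt (by linarith only [hε0] : m - 2*ε < m))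
          (by linarith only [hεB])
      rw [hTM, sl_comm g (m - 2*ε) m]
      rw [sl_comm g xB m] at hB
      exact le_trans hB hmono
    -- b7 (scaled) : ε * (gm - 2*δ') ≤ ε * TB
    have b7 : ε * (gm - 2*δ') ≤ ε * TB := by
      have s1 := mul_le_mul_of_nonneg_left hBM hε0.le
      have s2 := mul_le_mul_of_nonneg_left b6 hε0.le
      linarith only [eT1, eTB, eTM, s1, s2]
    -- star at (m - ε, m + ε)
    have star' := hstar (m - ε) hm' (m + ε) ht' hne'
    set rF' : ℝ := (dd f (m - ε) (m + ε)).toReal with hrF'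
    set rG' : ℝ := (dd g (m - ε) (m + ε)).toReal with hrG'
    clear_value rF' rG'
    -- b1 : rF' ≤ 2 * ε * S1
    have b1 : rF' ≤ 2 * ε * S1 := by
      have hhalf : (1/2 : ℝ) ∈ Ioc (0:ℝ) 1 := ⟨by norm_num, by norm_num⟩
      have key2 := toReal_dd_le hf hm' ht' hne' hhalf
      rw [qd, show m - ε + 1/2 * (m + ε - (m - ε)) = m from by ring] at key2
      norm_num at key2
      rw [hrF']
      linarith only [key2, eS1]
    -- b2 : 2 * ε * TB ≤ rG'
    have b2 : 2 * ε * TB ≤ rG' := by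
      rw [hrG']
      refine le_toReal_dd hg hm' ht' hne' (fun h hh => ?_)
      rw [qd_eq_slope (ne_of_gt hh.1) hne',
        show m + ε - (m - ε) = 2*ε from by ring]
      have hz : m - ε + h * (2*ε) ∈ Icc (0:ℝ) 1 := by
        constructor
        · nlinarith only [hh.1, hε0, hm'.1]
        · nlinarith only [hh.2, hε0, ht'.2]
      have hzm : m - ε < m - ε + h * (2*ε) := by nlinarith only [hh.1, hε0]
      have h1 : sl g (m - 2*ε) (m - ε) ≤ sl g (m - ε) (m - ε + h * (2*ε)) :=
        slope_mono_adj hg ⟨by linarith only [hεm, hm0], by linarith only [hε0, hm.2]⟩ hz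
          (by linarith only [hε0]) hzm
      rw [hTB]
      exact mul_le_mul_of_nonneg_left h1 (by positivity)
    -- combine
    have s3 := mul_le_mul_of_nonneg_left b3 hε0.le
    have s4 := mul_le_mul_of_nonneg_left b4 hε0.le
    have s5 := mul_le_mul_of_nonneg_left b5 hε0.le
    have s6 := mul_le_mul_of_nonneg_left b6 hε0.le
    have c1 : ε * S2 - ε * S1 ≤ f (m + ε) - f (m - ε) - rF' := by
      linarith only [eS1, eS2, b1]
    have c2 : g (m + ε) - g (m - ε) - rG' ≤ ε * (gp - gm + 5 * δ') := by
      linarith only [eT1, eT2, b2, s5, s6, b7]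
    have c3 : L * (g (m + ε) - g (m - ε) - rG') ≤ L * (ε * (gp - gm + 5 * δ')) :=
      mul_le_mul_of_nonneg_left c2 hL
    have main : ε * (fp - fm) ≤ ε * (L * (gp - gm + 5 * δ')) := by
      linarith only [s3, s4, c1, star', c3]
    have main' : fp - fm ≤ L * (gp - gm + 5 * δ') := le_of_mul_le_mul_left main hε0
    have hfin : 5 * L * δ' ≤ δ := by
      have h5 : (0:ℝ) < 5 * (L + 1) := by linarith only [hL]
      rw [show 5 * L * δ' = 5 * L * δ / (5 * (L + 1)) from by rw [hδ']; ring,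
        div_le_iff₀ h5]
      have := mul_nonneg hL hδ.le
      nlinarith only [this, hδ]
    linarith only [main', hfin]
  have e1 : (dd f m 0).toReal / m = -fm := by rw [hfm]; ring
  have e2 : (dd g m 0).toReal / m = -gm := by rw [hgm]; ring
  rw [e1, e2]
  linarith only [key]

/-- Core real lemma: smoothness implies the convexity inequality. -/
lemma core (hf : ConvexOn ℝ (Icc (0:ℝ) 1) f) (hg : ConvexOn ℝ (Icc (0:ℝ) 1) g)
    (hL : 0 ≤ L)
    (hstar : ∀ m ∈ Ioo (0:ℝ) 1, ∀ t ∈ Icc (0:ℝ) 1, t ≠ m →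
      f t - f m - (dd f m t).toReal ≤ L * (g t - g m - (dd g m t).toReal))
    {b : ℝ} (hb : b ∈ Ioo (0:ℝ) 1) :
    L * g b - f b ≤ (1 - b) * (L * g 0 - f 0) + b * (L * g 1 - f 1) := by
  have hb0 : (0:ℝ) < b := hb.1
  have h1b : (0:ℝ) < 1 - b := by linarith only [hb.2]
  have i1 := hstar b hb 1 mem01 (one_ne hb)
  have i0 := hstar b hb 0 mem00 (zero_ne hb)
  have j := jump_le hf hg hL hstar hb
  have j' : b * (dd f b 1).toReal + (1 - b) * (dd f b 0).toReal
      ≤ L * (b * (dd g b 1).toReal + (1 - b) * (dd g b 0).toReal) := by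
    have hpos : (0:ℝ) < b * (1 - b) := mul_pos hb0 h1b
    have e : b * (1 - b) * ((dd f b 1).toReal / (1 - b) + (dd f b 0).toReal / b)
        = b * (dd f b 1).toReal + (1 - b) * (dd f b 0).toReal := by
      field_simp
    have e' : b * (1 - b) * (L * ((dd g b 1).toReal / (1 - b) + (dd g b 0).toReal / b))
        = L * (b * (dd g b 1).toReal + (1 - b) * (dd g b 0).toReal) := by
      field_simp
    have h2 := mul_le_mul_of_nonneg_left j hpos.le
    rw [e, e'] at h2
    exact h2
  have s1 := mul_le_mul_of_nonneg_left i1 hb0.le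
  have s0 := mul_le_mul_of_nonneg_left i0 h1b.le
  linarith only [s1, s0, j']

end Core

/-! ### Segment parametrization in the vector space -/

section Seg

variable {Y : Type*} [AddCommGroup Y] [Module ℝ Y]

lemma seg_comb (μ ν : Y) (s : ℝ) : μ + s • (ν - μ) = (1 - s) • μ + s • ν := by
  rw [smul_sub, sub_smul, one_smul]; abel

lemma seg_affine (μ ν : Y) (x y a b : ℝ) (hab : a + b = 1) :
    μ + (a * x + b * y) • (ν - μ) = a • (μ + x • (ν - μ)) + b • (μ + y • (ν - μ)) := by
  have : a • (μ + x • (ν - μ)) + b • (μ + y • (ν - μ))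
      = (a + b) • μ + (a * x + b * y) • (ν - μ) := by
    rw [smul_add, smul_add, smul_smul, smul_smul, add_smul, add_smul]; abel
  rw [this, hab, one_smul]

lemma seg_facts (F : Y → EReal) (hFbot : ∀ y, F y ≠ ⊥)
    (hFconv : ∀ x y : Y, ∀ a b : ℝ, 0 ≤ a → 0 ≤ b → a + b = 1 →
      F (a • x + b • y) ≤ (a : EReal) * F x + (b : EReal) * F y)
    (μ ν : Y) (hμ : F μ ≠ ⊤) (hν : F ν ≠ ⊤) :
    (∀ s ∈ Icc (0:ℝ) 1,
        F (μ + s • (ν - μ)) = (((F (μ + s • (ν - μ))).toReal : ℝ) : EReal)) ∧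
      ConvexOn ℝ (Icc (0:ℝ) 1) (fun s => (F (μ + s • (ν - μ))).toReal) := by
  have hfin : ∀ s ∈ Icc (0:ℝ) 1, F (μ + s • (ν - μ)) ≠ ⊤ := by
    intro s hs
    have h1 := hFconv μ ν (1 - s) s (by linarith only [hs.2]) hs.1 (by ring)
    rw [← seg_comb] at h1
    intro e
    rw [e, ← EReal.coe_toReal hμ (hFbot μ), ← EReal.coe_toReal hν (hFbot ν),
      ← EReal.coe_mul, ← EReal.coe_mul, ← EReal.coe_add, top_le_iff] at h1
    exact (EReal.coe_ne_top _) h1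
  have hcoe : ∀ s ∈ Icc (0:ℝ) 1,
      F (μ + s • (ν - μ)) = (((F (μ + s • (ν - μ))).toReal : ℝ) : EReal) :=
    fun s hs => (EReal.coe_toReal (hfin s hs) (hFbot _)).symm
  refine ⟨hcoe, ⟨convex_Icc 0 1, ?_⟩⟩
  intro x hx y hy a b ha hb hab
  have hmem : a * x + b * y ∈ Icc (0:ℝ) 1 := by
    constructor
    · nlinarith [hx.1, hy.1]
    · nlinarith [hx.2, hy.2, hx.1, hy.1]
  have h1 := hFconv (μ + x • (ν - μ)) (μ + y • (ν - μ)) a b ha hb hab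
  rw [← seg_affine μ ν x y a b hab] at h1
  rw [hcoe _ hmem, hcoe _ hx, hcoe _ hy, ← EReal.coe_mul, ← EReal.coe_mul,
    ← EReal.coe_add] at h1
  exact_mod_cast h1

/-- The difference quotient of `F` along the segment tends to `dd f m t`. -/
lemma tendsto_seg (F : Y → EReal) (μ ν : Y)
    (hcoe : ∀ s ∈ Icc (0:ℝ) 1,
      F (μ + s • (ν - μ)) = (((F (μ + s • (ν - μ))).toReal : ℝ) : EReal))
    (hf : ConvexOn ℝ (Icc (0:ℝ) 1) (fun s => (F (μ + s • (ν - μ))).toReal))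
    {m t : ℝ} (hm : m ∈ Icc (0:ℝ) 1) (ht : t ∈ Icc (0:ℝ) 1) (hne : t ≠ m) :
    Tendsto (fun h : ℝ => ((h⁻¹ : ℝ) : EReal) *
        (F ((μ + m • (ν - μ)) + h • ((μ + t • (ν - μ)) - (μ + m • (ν - μ))))
          - F (μ + m • (ν - μ))))
      (nhdsWithin (0:ℝ) (Ioi 0))
      (nhds (dd (fun s => (F (μ + s • (ν - μ))).toReal) m t)) := by
  set f : ℝ → ℝ := fun s => (F (μ + s • (ν - μ))).toReal with hfdef
  have hT := tendsto_qd (qd_monotoneOn hf hm ht hne)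
  refine hT.congr' ?_
  filter_upwards [Ioc_mem_nhdsGT_of_mem (⟨le_refl _, one_pos⟩ : (0:ℝ) ∈ Ico (0:ℝ) 1)]
    with h hh
  have harg : (μ + m • (ν - μ)) + h • ((μ + t • (ν - μ)) - (μ + m • (ν - μ)))
      = μ + (m + h * (t - m)) • (ν - μ) := by
    have e1 : (μ + t • (ν - μ)) - (μ + m • (ν - μ)) = (t - m) • (ν - μ) := by
      rw [sub_smul]; abel
    rw [e1, smul_smul, add_smul]; abel
  have hmem : m + h * (t - m) ∈ Icc (0:ℝ) 1 := comb_mem hm ht ⟨hh.1.le, hh.2⟩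
  rw [harg, hcoe _ hmem, hcoe _ hm, ← EReal.coe_sub, ← EReal.coe_mul]
  rfl

end Seg

end RelSmooth

open RelSmooth


/-- For convex proper `F, φ` and `L ≥ 0`, `F` is `L`-smooth relative to `φ`
on a convex set `C` (Bregman divergence inequality `D_F(ν|μ) ≤ L·D_φ(ν|μ)` for all
`μ, ν ∈ C ∩ dom F ∩ dom φ`, with the directional derivatives given as limits of difference
quotients) iff `Lφ − F` is convex on `C ∩ dom F ∩ dom φ`. -/
theorem relative_smoothness_iff_convex_difference
    {Y : Type*} [AddCommGroup Y] [Module ℝ Y]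
    (F φ : Y → EReal)
    (hFbot : ∀ y, F y ≠ ⊥) (hφbot : ∀ y, φ y ≠ ⊥)
    (hFproper : ∃ y, F y ≠ ⊤) (hφproper : ∃ y, φ y ≠ ⊤)
    (hFconv : ∀ x y : Y, ∀ a b : ℝ, 0 ≤ a → 0 ≤ b → a + b = 1 →
      F (a • x + b • y) ≤ (a : EReal) * F x + (b : EReal) * F y)
    (hφconv : ∀ x y : Y, ∀ a b : ℝ, 0 ≤ a → 0 ≤ b → a + b = 1 →
      φ (a • x + b • y) ≤ (a : EReal) * φ x + (b : EReal) * φ y)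
    (C : Set Y) (hC : Convex ℝ C)
    (L : ℝ) (hL : 0 ≤ L) :
    -- `L`-relative smoothness of `F` w.r.t. `φ` on `C`
    (∀ μ ∈ C ∩ {y : Y | F y ≠ ⊤} ∩ {y : Y | φ y ≠ ⊤},
     ∀ ν ∈ C ∩ {y : Y | F y ≠ ⊤} ∩ {y : Y | φ y ≠ ⊤},
      ∀ dF dφ : EReal,
        Tendsto (fun h : ℝ => ((h⁻¹ : ℝ) : EReal) * (F (μ + h • (ν - μ)) - F μ))
          (nhdsWithin (0 : ℝ) (Set.Ioi 0)) (nhds dF) →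
        Tendsto (fun h : ℝ => ((h⁻¹ : ℝ) : EReal) * (φ (μ + h • (ν - μ)) - φ μ))
          (nhdsWithin (0 : ℝ) (Set.Ioi 0)) (nhds dφ) →
        F ν - F μ - dF ≤ (L : EReal) * (φ ν - φ μ - dφ))
    ↔
    -- convexity of `Lφ − F` on `C ∩ dom F ∩ dom φ`
    (∀ μ ∈ C ∩ {y : Y | F y ≠ ⊤} ∩ {y : Y | φ y ≠ ⊤},
     ∀ ν ∈ C ∩ {y : Y | F y ≠ ⊤} ∩ {y : Y | φ y ≠ ⊤},
      ∀ a b : ℝ, 0 ≤ a → 0 ≤ b → a + b = 1 →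
        (L : EReal) * φ (a • μ + b • ν) - F (a • μ + b • ν)
          ≤ (a : EReal) * ((L : EReal) * φ μ - F μ)
            + (b : EReal) * ((L : EReal) * φ ν - F ν)) := by
  constructor
  · -- smoothness → convexity of Lφ - F
    intro Hsm μ hμ ν hν a b ha hb hab
    obtain ⟨⟨hμC, hμF⟩, hμφ⟩ := hμ
    obtain ⟨⟨hνC, hνF⟩, hνφ⟩ := hν
    obtain ⟨Ffin, hfconv⟩ := seg_facts F hFbot hFconv μ ν hμF hνF
    obtain ⟨Gfin, hgconv⟩ := seg_facts φ hφbot hφconv μ ν hμφ hνφ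
    have e0' : μ + (0:ℝ) • (ν - μ) = μ := by simp
    have e1' : μ + (1:ℝ) • (ν - μ) = ν := by simp
    -- membership of segment points
    have hmemS : ∀ s ∈ Icc (0:ℝ) 1,
        (μ + s • (ν - μ)) ∈ C ∩ {y : Y | F y ≠ ⊤} ∩ {y : Y | φ y ≠ ⊤} := by
      intro s hs
      refine ⟨⟨?_, ?_⟩, ?_⟩
      · rw [seg_comb]
        exact hC hμC hνC (by linarith only [hs.2]) hs.1 (by ring)
      · show F (μ + s • (ν - μ)) ≠ ⊤
        rw [Ffin s hs]; exact EReal.coe_ne_top _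
      · show φ (μ + s • (ν - μ)) ≠ ⊤
        rw [Gfin s hs]; exact EReal.coe_ne_top _
    -- the real smoothness inequality at interior base points
    have hstar : ∀ m ∈ Ioo (0:ℝ) 1, ∀ t ∈ Icc (0:ℝ) 1, t ≠ m →
        (F (μ + t • (ν - μ))).toReal - (F (μ + m • (ν - μ))).toReal
            - (dd (fun s => (F (μ + s • (ν - μ))).toReal) m t).toReal
          ≤ L * ((φ (μ + t • (ν - μ))).toReal - (φ (μ + m • (ν - μ))).toReal
            - (dd (fun s => (φ (μ + s • (ν - μ))).toReal) m t).toReal) := by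
      intro m hm t ht hne
      have hmI : m ∈ Icc (0:ℝ) 1 := ⟨hm.1.le, hm.2.le⟩
      have h1 := Hsm _ (hmemS m hmI) _ (hmemS t ht)
        (dd (fun s => (F (μ + s • (ν - μ))).toReal) m t)
        (dd (fun s => (φ (μ + s • (ν - μ))).toReal) m t)
        (tendsto_seg F μ ν Ffin hfconv hmI ht hne)
        (tendsto_seg φ μ ν Gfin hgconv hmI ht hne)
      rw [dd_real hfconv hm ht hne, dd_real hgconv hm ht hne, Ffin t ht, Ffin m hmI,
        Gfin t ht, Gfin m hmI] at h1
      exact_mod_cast h1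
    -- the real convexity inequality
    have hbmem : b ∈ Icc (0:ℝ) 1 := ⟨hb, by linarith only [ha, hab]⟩
    have hreal : L * (φ (μ + b • (ν - μ))).toReal - (F (μ + b • (ν - μ))).toReal
        ≤ a * (L * (φ μ).toReal - (F μ).toReal) + b * (L * (φ ν).toReal - (F ν).toReal) := by
      rcases eq_or_lt_of_le hb with hb0 | hb0
      · rw [← hb0, e0']
        have haa : a = 1 := by linarith only [hab, hb0]
        rw [haa]; ring_nf; exact le_refl _
      · rcases eq_or_lt_of_le hbmem.2 with hb1 | hb1
        · rw [hb1, e1']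
          have haa : a = 0 := by linarith only [hab, hb1]
          rw [haa]; ring_nf; exact le_refl _
        · have hcore : L * (φ (μ + b • (ν - μ))).toReal - (F (μ + b • (ν - μ))).toReal
              ≤ (1 - b) * (L * (φ (μ + (0:ℝ) • (ν - μ))).toReal
                  - (F (μ + (0:ℝ) • (ν - μ))).toReal)
                + b * (L * (φ (μ + (1:ℝ) • (ν - μ))).toReal
                  - (F (μ + (1:ℝ) • (ν - μ))).toReal) :=
            core hfconv hgconv hL hstar ⟨hb0, hb1⟩
          rw [e0', e1'] at hcore
          have haa : a = 1 - b := by linarith only [hab]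
          rw [haa]; exact hcore
    -- cast back to EReal
    have hw : a • μ + b • ν = μ + b • (ν - μ) := by
      rw [seg_comb, show (1:ℝ) - b = a from by linarith only [hab]]
    rw [hw, Ffin b hbmem, Gfin b hbmem,
      ← EReal.coe_toReal hμF (hFbot μ), ← EReal.coe_toReal hνF (hFbot ν),
      ← EReal.coe_toReal hμφ (hφbot μ), ← EReal.coe_toReal hνφ (hφbot ν)]
    exact_mod_cast hreal
  · -- convexity of Lφ - F → smoothness
    intro Hcv μ hμ ν hν dF dφ hTF hTφ
    obtain ⟨⟨hμC, hμF⟩, hμφ⟩ := hμ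
    obtain ⟨⟨hνC, hνF⟩, hνφ⟩ := hν
    obtain ⟨Ffin, hfconv⟩ := seg_facts F hFbot hFconv μ ν hμF hνF
    obtain ⟨Gfin, hgconv⟩ := seg_facts φ hφbot hφconv μ ν hμφ hνφ
    have e0' : μ + (0:ℝ) • (ν - μ) = μ := by simp
    have e1' : μ + (1:ℝ) • (ν - μ) = ν := by simp
    have h01 : (1:ℝ) ≠ (0:ℝ) := one_ne_zero
    -- identify dF and dφ
    have TF' : Tendsto (fun h : ℝ => ((h⁻¹ : ℝ) : EReal) * (F (μ + h • (ν - μ)) - F μ))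
        (nhdsWithin (0 : ℝ) (Set.Ioi 0))
        (nhds (dd (fun s => (F (μ + s • (ν - μ))).toReal) 0 1)) := by
      have := tendsto_seg F μ ν Ffin hfconv mem00 mem01 h01
      simpa only [e0', e1'] using this
    have Tφ' : Tendsto (fun h : ℝ => ((h⁻¹ : ℝ) : EReal) * (φ (μ + h • (ν - μ)) - φ μ))
        (nhdsWithin (0 : ℝ) (Set.Ioi 0))
        (nhds (dd (fun s => (φ (μ + s • (ν - μ))).toReal) 0 1)) := by
      have := tendsto_seg φ μ ν Gfin hgconv mem00 mem01 h01
      simpa only [e0', e1'] using this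
    obtain rfl : dF = dd (fun s => (F (μ + s • (ν - μ))).toReal) 0 1 :=
      tendsto_nhds_unique hTF TF'
    obtain rfl : dφ = dd (fun s => (φ (μ + s • (ν - μ))).toReal) 0 1 :=
      tendsto_nhds_unique hTφ Tφ'
    -- abbreviations for the (finite) endpoint values
    set rF0 : ℝ := (F μ).toReal with hrF0
    set rF1 : ℝ := (F ν).toReal with hrF1
    set rG0 : ℝ := (φ μ).toReal with hrG0
    set rG1 : ℝ := (φ ν).toReal with hrG1
    set K : ℝ := (rF1 - rF0) - L * (rG1 - rG0) with hK
    -- the convexity inequality along the segment, in real form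
    have club : ∀ h ∈ Ioc (0:ℝ) 1,
        K + L * qd (fun s => (φ (μ + s • (ν - μ))).toReal) 0 1 h
          ≤ qd (fun s => (F (μ + s • (ν - μ))).toReal) 0 1 h := by
      intro h hh
      have hhne : h ≠ 0 := ne_of_gt hh.1
      have hhI : h ∈ Icc (0:ℝ) 1 := ⟨hh.1.le, hh.2⟩
      have h1 := Hcv μ ⟨⟨hμC, hμF⟩, hμφ⟩ ν ⟨⟨hνC, hνF⟩, hνφ⟩ (1 - h) h
        (by linarith only [hh.2]) hh.1.le (by ring)
      rw [← seg_comb] at h1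
      rw [Ffin h hhI, Gfin h hhI,
        ← EReal.coe_toReal hμF (hFbot μ), ← EReal.coe_toReal hνF (hFbot ν),
        ← EReal.coe_toReal hμφ (hφbot μ), ← EReal.coe_toReal hνφ (hφbot ν)] at h1
      have h2 : L * (φ (μ + h • (ν - μ))).toReal - (F (μ + h • (ν - μ))).toReal
          ≤ (1 - h) * (L * rG0 - rF0) + h * (L * rG1 - rF1) := by exact_mod_cast h1
      -- difference quotient form
      have qF : qd (fun s => (F (μ + s • (ν - μ))).toReal) 0 1 h
          = h⁻¹ * ((F (μ + h • (ν - μ))).toReal - rF0) := by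
        simp only [qd]
        rw [show (0:ℝ) + h * (1 - 0) = h from by ring, e0', hrF0]
      have qG : qd (fun s => (φ (μ + s • (ν - μ))).toReal) 0 1 h
          = h⁻¹ * ((φ (μ + h • (ν - μ))).toReal - rG0) := by
        simp only [qd]
        rw [show (0:ℝ) + h * (1 - 0) = h from by ring, e0', hrG0]
      rw [qF, qG]
      -- divide by h
      have key : L * ((φ (μ + h • (ν - μ))).toReal - rG0) + h * K
          ≤ (F (μ + h • (ν - μ))).toReal - rF0 := by
        rw [hK]; nlinarith only [h2, hh.1, hh.2]
      have h3 := mul_le_mul_of_nonneg_left key (inv_nonneg.2 hh.1.le)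
      have h4 : h⁻¹ * (h * K) = K := by field_simp
      have h5 : h⁻¹ * (L * ((φ (μ + h • (ν - μ))).toReal - rG0) + h * K)
          = L * (h⁻¹ * ((φ (μ + h • (ν - μ))).toReal - rG0)) + h⁻¹ * (h * K) := by ring
      rw [h5, h4] at h3
      linarith only [h3]
    -- goal rewriting
    rw [← EReal.coe_toReal hμF (hFbot μ), ← EReal.coe_toReal hνF (hFbot ν),
      ← EReal.coe_toReal hμφ (hφbot μ), ← EReal.coe_toReal hνφ (hφbot ν)]
    by_cases hbot : dd (fun s => (φ (μ + s • (ν - μ))).toReal) 0 1 = ⊥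
    · by_cases hL0 : L = 0
      · -- L = 0 : both sides are 0
        subst hL0
        have hqd1 : qd (fun s => (F (μ + s • (ν - μ))).toReal) 0 1 1 = rF1 - rF0 := by
          rw [qd_one]
          simp only [e0', e1', hrF0, hrF1]
        have hKval : K = rF1 - rF0 := by rw [hK]; ring
        have hdF : dd (fun s => (F (μ + s • (ν - μ))).toReal) 0 1
            = ((rF1 - rF0 : ℝ) : EReal) := by
          refine le_antisymm ?_ ?_
          · have := dd_le (f := fun s => (F (μ + s • (ν - μ))).toReal) (m := 0) (t := 1)
              (h := 1) ⟨one_pos, le_refl 1⟩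
            rwa [hqd1] at this
          · refine dd_ge (fun h hh => ?_)
            have := club h hh
            rw [hKval] at this
            nlinarith only [this]
        rw [hdF, hbot]
        rw [show ((0:ℝ) : EReal) = (0 : EReal) from rfl]
        rw [EReal.zero_mul]
        rw [← EReal.coe_sub, ← EReal.coe_sub]
        exact_mod_cast (show (F ν).toReal - (F μ).toReal - (rF1 - rF0) ≤ (0:ℝ) by
          rw [hrF1, hrF0]; linarith only [])
      · -- L > 0 : RHS is ⊤
        have hLpos : 0 < L := lt_of_le_of_ne hL (Ne.symm hL0)
        rw [hbot]
        have hne : (((φ ν).toReal : ℝ) : EReal) - (((φ μ).toReal : ℝ) : EReal) ≠ ⊥ := by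
          rw [← EReal.coe_sub]; exact EReal.coe_ne_bot _
        rw [EReal.sub_bot hne, EReal.coe_mul_top_of_pos hLpos]
        exact le_top
    · -- dφ is finite
      have hdφ : dd (fun s => (φ (μ + s • (ν - μ))).toReal) 0 1
          = (((dd (fun s => (φ (μ + s • (ν - μ))).toReal) 0 1).toReal : ℝ) : EReal) :=
        (EReal.coe_toReal dd_ne_top hbot).symm
      set r : ℝ := (dd (fun s => (φ (μ + s • (ν - μ))).toReal) 0 1).toReal with hr
      have hrle : ∀ h ∈ Ioc (0:ℝ) 1,
          r ≤ qd (fun s => (φ (μ + s • (ν - μ))).toReal) 0 1 h := by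
        intro h hh
        have := dd_le (f := fun s => (φ (μ + s • (ν - μ))).toReal) (m := 0) (t := 1) hh
        rw [hdφ] at this
        exact_mod_cast this
      have hdFge : ((K + L * r : ℝ) : EReal)
          ≤ dd (fun s => (F (μ + s • (ν - μ))).toReal) 0 1 := by
        refine dd_ge (fun h hh => ?_)
        have h1 := club h hh
        have h2 := mul_le_mul_of_nonneg_left (hrle h hh) hL
        linarith only [h1, h2]
      have hdFbot : dd (fun s => (F (μ + s • (ν - μ))).toReal) 0 1 ≠ ⊥ := by
        intro e
        rw [e, le_bot_iff] at hdFge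
        exact (EReal.coe_ne_bot _) hdFge
      have hdF : dd (fun s => (F (μ + s • (ν - μ))).toReal) 0 1
          = (((dd (fun s => (F (μ + s • (ν - μ))).toReal) 0 1).toReal : ℝ) : EReal) :=
        (EReal.coe_toReal dd_ne_top hdFbot).symm
      set rF : ℝ := (dd (fun s => (F (μ + s • (ν - μ))).toReal) 0 1).toReal with hrF
      have hrFge : K + L * r ≤ rF := by
        rw [hdF] at hdFge
        exact_mod_cast hdFge
      rw [hdF, hdφ]
      have : rF1 - rF0 - rF ≤ L * (rG1 - rG0 - r) := by rw [hK] at hrFge; linarith only [hrFge]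
      exact_mod_cast this
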